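/- arXiv:math/0207182 — 4 statements merged into one kernel-verified Lean document; each statement's English description precedes it below -/
import Mathlib

section
/- Let Λ be a lattice in E = EuclideanSpace ℝ (Fin n) with minimal norm μ, let U be a subspace with orthogonal complement V = Uᗮ and orthogonal projections π_U, π_V, and let S ⊆ π_U(Λ) be a finite set such that ‖u − u'‖² ≤ β for all u, u' ∈ S. Then any two distinct points x, y of the antipode set A(S) = {π_V w : w ∈ Λ, π_U w ∈ S} satisfy ‖x − y‖² ≥ μ − β. -/
/-- **Antipode construction, separation bound.**
Let `Λ` be a lattice in `E = EuclideanSpace ℝ (Fin n)` with minimal norm `μ`,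
`U` a subspace with orthogonal complement `V = Uᗮ`, `π_U`, `π_V` the orthogonal
projections, and `S ⊆ π_U(Λ)` a finite set with `‖u - u'‖² ≤ β` for all
`u, u' ∈ S`.  Then any two distinct points of the antipode set
`A(S) = {π_V w : w ∈ Λ, π_U w ∈ S}` are at squared distance at least `μ - β`. -/
theorem antipode_separation {n : ℕ}
    (Λ : Submodule ℤ (EuclideanSpace ℝ (Fin n)))
    [DiscreteTopology Λ] [IsZLattice ℝ Λ]
    (μ : ℝ) (hμ : ∀ w ∈ Λ, w ≠ 0 → μ ≤ ‖w‖ ^ 2)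
    (U : Submodule ℝ (EuclideanSpace ℝ (Fin n)))
    (S : Finset (EuclideanSpace ℝ (Fin n)))
    (hSsub : ∀ u ∈ S, ∃ w ∈ Λ,
      (U.orthogonalProjectionOnto w : EuclideanSpace ℝ (Fin n)) = u)
    (β : ℝ)
    (hβ : ∀ u ∈ S, ∀ u' ∈ S, ‖u - u'‖ ^ 2 ≤ β)
    (x y : EuclideanSpace ℝ (Fin n))
    (hx : x ∈ {v : EuclideanSpace ℝ (Fin n) | ∃ w ∈ Λ,
      (U.orthogonalProjectionOnto w : EuclideanSpace ℝ (Fin n)) ∈ S ∧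
      (Uᗮ.orthogonalProjectionOnto w : EuclideanSpace ℝ (Fin n)) = v})
    (hy : y ∈ {v : EuclideanSpace ℝ (Fin n) | ∃ w ∈ Λ,
      (U.orthogonalProjectionOnto w : EuclideanSpace ℝ (Fin n)) ∈ S ∧
      (Uᗮ.orthogonalProjectionOnto w : EuclideanSpace ℝ (Fin n)) = v})
    (hxy : x ≠ y) :
    μ - β ≤ ‖x - y‖ ^ 2 := by
  obtain ⟨w, hwΛ, hwS, hwx⟩ := hx
  obtain ⟨w', hw'Λ, hw'S, hw'y⟩ := hy
  have hne : w - w' ≠ 0 := by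
    intro h
    apply hxy
    have : w = w' := sub_eq_zero.mp h
    rw [← hwx, ← hw'y, this]
  have hmem : w - w' ∈ Λ := Λ.sub_mem hwΛ hw'Λ
  have hμ' : μ ≤ ‖w - w'‖ ^ 2 := hμ _ hmem hne
  -- Pythagoras decomposition
  set a : EuclideanSpace ℝ (Fin n) :=
    (U.orthogonalProjectionOnto (w - w') : EuclideanSpace ℝ (Fin n))
  set b : EuclideanSpace ℝ (Fin n) :=
    (Uᗮ.orthogonalProjectionOnto (w - w') : EuclideanSpace ℝ (Fin n))
  have hsum : w - w' = a + b := by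
    simpa [a, b] using
      (U.starProjection_add_starProjection_orthogonal (w - w')).symm
  have hinner : inner ℝ a b = (0:ℝ) := by
    exact Submodule.inner_right_of_mem_orthogonal
      (U.orthogonalProjectionOnto (w - w')).2 (Uᗮ.orthogonalProjectionOnto (w - w')).2
  have hpyth : ‖w - w'‖ ^ 2 = ‖a‖ ^ 2 + ‖b‖ ^ 2 := by
    rw [hsum, norm_add_sq_real, hinner]; ring
  have ha : ‖a‖ ^ 2 ≤ β := by
    have := hβ _ hwS _ hw'S
    simpa [a, map_sub] using this
  have hb : b = x - y := by
    rw [← hwx, ← hw'y]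
    simp [b, map_sub]
  have : μ ≤ ‖a‖ ^ 2 + ‖x - y‖ ^ 2 := by rw [← hb, ← hpyth]; exact hμ'
  linarith
end

section
/- Let Λ be a lattice in E = EuclideanSpace ℝ (Fin n) with minimal norm μ, let U be a subspace with orthogonal complement V = Uᗮ and orthogonal projections π_U, π_V, and let S ⊆ π_U(Λ) be a finite set with ‖u − u'‖² ≤ β for all u, u' ∈ S, where 0 ≤ β ≤ μ. Then the open balls of radius ρ = (1/2)·√(μ − β) centered at the points of the antipode set A(S) = {π_V w : w ∈ Λ, π_U w ∈ S} are pairwise disjoint; that is, A(S) together with radius ρ forms a sphere packing. -/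
/-- **Antipode construction gives a sphere packing.**
Let `Λ` be a lattice in `E = EuclideanSpace ℝ (Fin n)` with minimal norm `μ`,
`U` a subspace with orthogonal complement `V = Uᗮ`, and `S ⊆ π_U(Λ)` a finite
set with `‖u - u'‖² ≤ β` for all `u, u' ∈ S`, where `0 ≤ β ≤ μ`.  Then the open
balls of radius `ρ = (1/2)·√(μ - β)` centered at the points of the antipode set
`A(S)` are pairwise disjoint. -/
theorem antipode_packing {n : ℕ}
    (Λ : Submodule ℤ (EuclideanSpace ℝ (Fin n)))
    [DiscreteTopology Λ] [IsZLattice ℝ Λ]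
    (μ : ℝ) (hμ : ∀ w ∈ Λ, w ≠ 0 → μ ≤ ‖w‖ ^ 2)
    (U : Submodule ℝ (EuclideanSpace ℝ (Fin n)))
    (S : Finset (EuclideanSpace ℝ (Fin n)))
    (hSsub : ∀ u ∈ S, ∃ w ∈ Λ,
      (Submodule.orthogonalProjectionOnto U w : EuclideanSpace ℝ (Fin n)) = u)
    (β : ℝ) (hβ0 : 0 ≤ β) (hβμ : β ≤ μ)
    (hβ : ∀ u ∈ S, ∀ u' ∈ S, ‖u - u'‖ ^ 2 ≤ β) :
    ({v : EuclideanSpace ℝ (Fin n) | ∃ w ∈ Λ,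
        (Submodule.orthogonalProjectionOnto U w : EuclideanSpace ℝ (Fin n)) ∈ S ∧
        (Submodule.orthogonalProjectionOnto Uᗮ w : EuclideanSpace ℝ (Fin n)) = v}).Pairwise
      (fun x y => Disjoint
        (Metric.ball x ((1 / 2) * Real.sqrt (μ - β)))
        (Metric.ball y ((1 / 2) * Real.sqrt (μ - β)))) := by
  rintro x ⟨w, hwΛ, hwS, hwV⟩ y ⟨w', hw'Λ, hw'S, hw'V⟩ hxy
  apply Metric.ball_disjoint_ball
  have hd : w - w' ≠ 0 := by
    intro h
    apply hxy
    rw [sub_eq_zero] at h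
    rw [← hwV, ← hw'V, h]
  have hkey : μ ≤ ‖w - w'‖ ^ 2 := hμ _ (Submodule.sub_mem _ hwΛ hw'Λ) hd
  have hpyth := Submodule.norm_sq_eq_add_norm_sq_projection (w - w') U
  have hU : (Submodule.orthogonalProjectionOnto U (w - w') : EuclideanSpace ℝ (Fin n))
      = (Submodule.orthogonalProjectionOnto U w : EuclideanSpace ℝ (Fin n)) - Submodule.orthogonalProjectionOnto U w' := by
    simp [map_sub]
  have hVp : (Submodule.orthogonalProjectionOnto Uᗮ (w - w') : EuclideanSpace ℝ (Fin n)) = x - y := by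
    simp [map_sub, hwV, hw'V]
  have hUb : ‖(Submodule.orthogonalProjectionOnto U (w - w') : EuclideanSpace ℝ (Fin n))‖ ^ 2 ≤ β := by
    rw [hU]; exact hβ _ hwS _ hw'S
  have e1 : ‖(Submodule.orthogonalProjectionOnto U (w - w') : EuclideanSpace ℝ (Fin n))‖
      = ‖Submodule.orthogonalProjectionOnto U (w - w')‖ := rfl
  have e2 : ‖(Submodule.orthogonalProjectionOnto Uᗮ (w - w') : EuclideanSpace ℝ (Fin n))‖
      = ‖Submodule.orthogonalProjectionOnto Uᗮ (w - w')‖ := rfl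
  have h1 : μ - β ≤ ‖x - y‖ ^ 2 := by
    rw [← hVp, e2]
    rw [e1] at hUb
    linarith
  have h2 : Real.sqrt (μ - β) ≤ dist x y := by
    rw [dist_eq_norm]
    calc Real.sqrt (μ - β) ≤ Real.sqrt (‖x - y‖ ^ 2) := Real.sqrt_le_sqrt h1
    _ = ‖x - y‖ := by rw [Real.sqrt_sq (norm_nonneg _)]
  linarith
end

section
/- Let Λ be a lattice in E = EuclideanSpace ℝ (Fin n) with minimal norm μ, let U be a subspace with orthogonal complement V = Uᗮ and orthogonal projections π_U, π_V, and let S ⊆ π_U(Λ) be a finite set with ‖u − u'‖² ≤ β for all u, u' ∈ S, where β < μ. Then for distinct u, u' ∈ S the fibers {π_V w : w ∈ Λ, π_U w = u} and {π_V w : w ∈ Λ, π_U w = u'} are disjoint; hence the antipode set A(S) is a disjoint union of exactly |S| cosets of L = Λ ∩ V. -/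
/-- **Fibers over distinct elements of `S` are disjoint when `β < μ`.**
Let `Λ` be a lattice in `E = EuclideanSpace ℝ (Fin n)` with minimal norm `μ`,
and `S ⊆ π_U(Λ)` finite with `‖u − u'‖² ≤ β` for all `u, u' ∈ S`, where
`β < μ`.  Then for distinct `u, u' ∈ S` the fibers
`{π_V w : w ∈ Λ, π_U w = u}` and `{π_V w : w ∈ Λ, π_U w = u'}` are disjoint;
hence `A(S)` is the disjoint union of exactly `|S|` cosets of `L = Λ ∩ V`. -/
theorem antipode_fibers_disjoint {n : ℕ}
    (Λ : Submodule ℤ (EuclideanSpace ℝ (Fin n)))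
    [DiscreteTopology Λ] [IsZLattice ℝ Λ]
    (μ : ℝ) (hμ : ∀ w ∈ Λ, w ≠ 0 → μ ≤ ‖w‖ ^ 2)
    (U : Submodule ℝ (EuclideanSpace ℝ (Fin n)))
    (S : Finset (EuclideanSpace ℝ (Fin n)))
    (hSsub : ∀ u ∈ S, ∃ w ∈ Λ,
      (Submodule.orthogonalProjectionOnto U w : EuclideanSpace ℝ (Fin n)) = u)
    (β : ℝ) (hβμ : β < μ)
    (hβ : ∀ u ∈ S, ∀ u' ∈ S, ‖u - u'‖ ^ 2 ≤ β) :
    (∀ u ∈ S, ∀ u' ∈ S, u ≠ u' →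
      Disjoint
        {v : EuclideanSpace ℝ (Fin n) | ∃ w ∈ Λ,
          (Submodule.orthogonalProjectionOnto U w : EuclideanSpace ℝ (Fin n)) = u ∧
          (Submodule.orthogonalProjectionOnto Uᗮ w : EuclideanSpace ℝ (Fin n)) = v}
        {v : EuclideanSpace ℝ (Fin n) | ∃ w ∈ Λ,
          (Submodule.orthogonalProjectionOnto U w : EuclideanSpace ℝ (Fin n)) = u' ∧
          (Submodule.orthogonalProjectionOnto Uᗮ w : EuclideanSpace ℝ (Fin n)) = v}) ∧
    (∀ u ∈ S, ∃ v₀ : EuclideanSpace ℝ (Fin n),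
      {v : EuclideanSpace ℝ (Fin n) | ∃ w ∈ Λ,
          (Submodule.orthogonalProjectionOnto U w : EuclideanSpace ℝ (Fin n)) = u ∧
          (Submodule.orthogonalProjectionOnto Uᗮ w : EuclideanSpace ℝ (Fin n)) = v}
        = (fun l => v₀ + l) '' {l : EuclideanSpace ℝ (Fin n) | l ∈ Λ ∧ l ∈ Uᗮ}) ∧
    {v : EuclideanSpace ℝ (Fin n) | ∃ w ∈ Λ,
        (Submodule.orthogonalProjectionOnto U w : EuclideanSpace ℝ (Fin n)) ∈ S ∧
        (Submodule.orthogonalProjectionOnto Uᗮ w : EuclideanSpace ℝ (Fin n)) = v}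
      = ⋃ u ∈ S, {v : EuclideanSpace ℝ (Fin n) | ∃ w ∈ Λ,
          (Submodule.orthogonalProjectionOnto U w : EuclideanSpace ℝ (Fin n)) = u ∧
          (Submodule.orthogonalProjectionOnto Uᗮ w : EuclideanSpace ℝ (Fin n)) = v} := by
  refine ⟨?_, ?_, ?_⟩
  · rintro u hu u' hu' hne
    rw [Set.disjoint_left]
    rintro v ⟨w, hw, hwu, hwv⟩ ⟨w', hw', hwu', hwv'⟩
    have hsub : w - w' ∈ Λ := sub_mem hw hw'
    have hne0 : w - w' ≠ 0 := by
      intro h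
      exact hne (by rw [sub_eq_zero] at h; rw [← hwu, ← hwu', h])
    have hdecomp : w - w' = u - u' := by
      have h1 : (Submodule.orthogonalProjectionOnto U (w - w') : EuclideanSpace ℝ (Fin n)) = u - u' := by
        rw [map_sub]; push_cast; rw [hwu, hwu']
      have h2 : (Submodule.orthogonalProjectionOnto Uᗮ (w - w') : EuclideanSpace ℝ (Fin n)) = 0 := by
        rw [map_sub]; push_cast; rw [hwv, hwv', sub_self]
      have := (by simpa only [Submodule.starProjection_apply] using U.starProjection_add_starProjection_orthogonal (w - w'))
      rw [h1, h2, add_zero] at this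
      exact this.symm
    have := hμ _ hsub hne0
    rw [hdecomp] at this
    linarith [hβ u hu u' hu']
  · intro u hu
    obtain ⟨w₀, hw₀, hw₀u⟩ := hSsub u hu
    refine ⟨(Submodule.orthogonalProjectionOnto Uᗮ w₀ : EuclideanSpace ℝ (Fin n)), ?_⟩
    ext v
    constructor
    · rintro ⟨w, hw, hwu, hwv⟩
      have h1 : (Submodule.orthogonalProjectionOnto U (w - w₀) : EuclideanSpace ℝ (Fin n)) = 0 := by
        rw [map_sub]; push_cast; rw [hwu, hw₀u, sub_self]
      have hdec := (by simpa only [Submodule.starProjection_apply] using U.starProjection_add_starProjection_orthogonal (w - w₀))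
      rw [h1, zero_add] at hdec
      refine ⟨w - w₀, ⟨sub_mem hw hw₀, ?_⟩, ?_⟩
      · rw [← hdec]
        exact (Submodule.orthogonalProjectionOnto Uᗮ (w - w₀)).2
      · have h2 : w - w₀ =
            (Submodule.orthogonalProjectionOnto Uᗮ w : EuclideanSpace ℝ (Fin n)) -
              (Submodule.orthogonalProjectionOnto Uᗮ w₀ : EuclideanSpace ℝ (Fin n)) := by
          rw [← hdec, map_sub]; push_cast; ring
        rw [h2, hwv]; module
    · rintro ⟨l, ⟨hlΛ, hlV⟩, rfl⟩
      refine ⟨w₀ + l, add_mem hw₀ hlΛ, ?_, ?_⟩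
      · rw [map_add]; push_cast
        rw [hw₀u, Submodule.orthogonalProjectionOnto_apply_of_mem_orthogonal hlV]
        push_cast; rw [add_zero]
      · rw [map_add]; push_cast
        rw [← Submodule.starProjection_apply Uᗮ l, Submodule.starProjection_eq_self_iff.2 hlV]
  · ext v
    simp only [Set.mem_setOf_eq, Set.mem_iUnion]
    constructor
    · rintro ⟨w, hw, hwS, hwv⟩
      exact ⟨_, hwS, w, hw, rfl, hwv⟩
    · rintro ⟨u, hu, w, hw, hwu, hwv⟩
      exact ⟨w, hw, hwu ▸ hu, hwv⟩
end

section
/- Let Λ be a lattice in E = EuclideanSpace ℝ (Fin n) that is self-dual (unimodular), meaning that x ∈ Λ if and only if ⟪x, y⟫ ∈ ℤ for all y ∈ Λ. Let U be a subspace with orthogonal projection π_U, and suppose K = Λ ∩ U spans U over ℝ. Then the projection π_U(Λ) equals the dual lattice of K inside U, i.e. π_U(Λ) = {x ∈ U : ⟪x, k⟫ ∈ ℤ for all k ∈ K}. -/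
/-- **Projection of a self-dual lattice is the dual of the section.**
Let `Λ` be a self-dual (unimodular) lattice in `E = EuclideanSpace ℝ (Fin n)`:
`x ∈ Λ ↔ ⟪x, y⟫ ∈ ℤ` for all `y ∈ Λ`.  Let `U` be a subspace with orthogonal
projection `π_U`, and suppose `K = Λ ∩ U` spans `U` over `ℝ`.  Then
`π_U(Λ) = {x ∈ U : ⟪x, k⟫ ∈ ℤ for all k ∈ K}`. -/
theorem projection_of_selfdual_is_dual {n : ℕ}
    (Λ : Submodule ℤ (EuclideanSpace ℝ (Fin n)))
    [DiscreteTopology Λ] [IsZLattice ℝ Λ]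
    (hself : ∀ x : EuclideanSpace ℝ (Fin n),
      x ∈ Λ ↔ ∀ y ∈ Λ, ∃ m : ℤ, (inner ℝ x y : ℝ) = (m : ℝ))
    (U : Submodule ℝ (EuclideanSpace ℝ (Fin n)))
    (hK : Submodule.span ℝ {k : EuclideanSpace ℝ (Fin n) | k ∈ Λ ∧ k ∈ U} = U) :
    {v : EuclideanSpace ℝ (Fin n) | ∃ w ∈ Λ,
        (U.orthogonalProjection w : EuclideanSpace ℝ (Fin n)) = v}
      = {x : EuclideanSpace ℝ (Fin n) | x ∈ U ∧
          ∀ k : EuclideanSpace ℝ (Fin n), k ∈ Λ → k ∈ U →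
            ∃ m : ℤ, (inner ℝ x k : ℝ) = (m : ℝ)} := by
  classical
  ext x
  simp only [Set.mem_setOf_eq]
  constructor
  · rintro ⟨w, hw, rfl⟩
    refine ⟨(U.orthogonalProjection w).2, ?_⟩
    intro k hkΛ hkU
    obtain ⟨m, hm⟩ := (hself w).mp hw k hkΛ
    refine ⟨m, ?_⟩
    have horth : w - (U.orthogonalProjection w : EuclideanSpace ℝ (Fin n)) ∈ Uᗮ :=
      U.sub_starProjection_mem_orthogonal w
    have h0 : (inner ℝ (w - (U.orthogonalProjection w : EuclideanSpace ℝ (Fin n))) k : ℝ) = 0 :=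
      (Submodule.mem_orthogonal' U _).mp horth k hkU
    rw [inner_sub_left] at h0
    linarith [hm]
  · rintro ⟨hxU, hint⟩
    -- the section K as a ℤ-submodule of Λ
    set K' : Submodule ℤ Λ := (U.restrictScalars ℤ).comap Λ.subtype with hK'
    -- φ : K' →ₗ ℤ given by inner product with x
    have key : ∀ k : K', ∃ m : ℤ, (inner ℝ x ((k : Λ) : EuclideanSpace ℝ (Fin n)) : ℝ) = (m : ℝ) :=
      fun k => hint _ (k : Λ).2 k.2
    let g : K' → ℤ := fun k => (key k).choose
    have gspec : ∀ k : K', (inner ℝ x ((k : Λ) : EuclideanSpace ℝ (Fin n)) : ℝ) = (g k : ℝ) :=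
      fun k => (key k).choose_spec
    have φadd : ∀ a b : K', g (a + b) = g a + g b := by
      intro a b
      have : ((g (a + b) : ℤ) : ℝ) = ((g a + g b : ℤ) : ℝ) := by
        rw [← gspec]
        push_cast
        rw [← gspec, ← gspec]
        simp [inner_add_right]
      exact_mod_cast this
    have φsmul : ∀ (m : ℤ) (a : K'), g (m • a) = m * g a := by
      intro m a
      have hcoe : (((m • a : K') : Λ) : EuclideanSpace ℝ (Fin n))
          = (m : ℝ) • ((a : Λ) : EuclideanSpace ℝ (Fin n)) := by
        rw [Submodule.coe_smul, Submodule.coe_smul, Int.cast_smul_eq_zsmul]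
      have : ((g (m • a) : ℤ) : ℝ) = ((m * g a : ℤ) : ℝ) := by
        rw [← gspec, hcoe, inner_smul_right, gspec]
        push_cast
        ring
      exact_mod_cast this
    let φ : K' →ₗ[ℤ] ℤ :=
      { toFun := g, map_add' := φadd, map_smul' := φsmul }
    -- the quotient Λ ⧸ K' is torsion-free hence free, so mkQ splits
    haveI : NoZeroSMulDivisors ℤ (Λ ⧸ K') := by
      refine ⟨fun {m q} h => ?_⟩
      by_cases hm : m = 0
      · exact Or.inl hm
      · refine Or.inr ?_
        obtain ⟨w, rfl⟩ := Submodule.Quotient.mk_surjective K' q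
        rw [← Submodule.Quotient.mk_smul] at h
        have hmem : m • w ∈ K' := (Submodule.Quotient.mk_eq_zero K').mp h
        have hmemU : ((m • w : Λ) : EuclideanSpace ℝ (Fin n)) ∈ U := hmem
        have hcoe2 : ((m • w : Λ) : EuclideanSpace ℝ (Fin n))
            = (m : ℝ) • (w : EuclideanSpace ℝ (Fin n)) := by
          rw [Submodule.coe_smul]
          exact (Int.cast_smul_eq_zsmul ℝ m _).symm
        have hsm : (m : ℝ) • (w : EuclideanSpace ℝ (Fin n)) ∈ U := hcoe2 ▸ hmemU
        have hwU : (w : EuclideanSpace ℝ (Fin n)) ∈ U := by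
          have := U.smul_mem ((m : ℝ)⁻¹) hsm
          rwa [smul_smul, inv_mul_cancel₀ (by exact_mod_cast hm), one_smul] at this
        exact (Submodule.Quotient.mk_eq_zero K').mpr hwU
    haveI : Module.Free ℤ (Λ ⧸ K') := Module.free_of_finite_type_torsion_free'
    obtain ⟨s, hs⟩ := Module.projective_lifting_property K'.mkQ LinearMap.id
      (Submodule.mkQ_surjective K')
    -- retraction Λ →ₗ K'
    have hmemr : ∀ w : Λ, w - s (K'.mkQ w) ∈ K' := by
      intro w
      have : K'.mkQ (w - s (K'.mkQ w)) = 0 := by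
        rw [map_sub]
        have := congrArg (fun f => f (K'.mkQ w)) hs
        simp only [LinearMap.comp_apply, LinearMap.id_apply] at this
        rw [this, sub_self]
      rwa [Submodule.mkQ_apply, Submodule.Quotient.mk_eq_zero] at this
    let r : Λ →ₗ[ℤ] K' :=
      LinearMap.codRestrict K' (LinearMap.id - s ∘ₗ K'.mkQ) hmemr
    let ψ : Λ →ₗ[ℤ] ℤ := φ ∘ₗ r
    have hψK : ∀ (k : Λ) (hk : k ∈ K'),
        (ψ k : ℝ) = (inner ℝ x (k : EuclideanSpace ℝ (Fin n)) : ℝ) := by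
      intro k hk
      have hr : r k = ⟨k, hk⟩ := by
        apply Subtype.ext
        show (k : Λ) - s (K'.mkQ k) = k
        rw [Submodule.mkQ_apply, (Submodule.Quotient.mk_eq_zero K').mpr hk, map_zero, sub_zero]
      show (φ (r k) : ℝ) = _
      rw [hr]
      exact (gspec ⟨k, hk⟩).symm
    -- extend ψ to an ℝ-linear functional
    let b := Module.Free.chooseBasis ℤ Λ
    let bE := Module.Basis.ofZLatticeBasis ℝ Λ b
    let f : EuclideanSpace ℝ (Fin n) →ₗ[ℝ] ℝ := bE.constr ℝ (fun i => (ψ (b i) : ℝ))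
    have hf : ∀ y : Λ, f (y : EuclideanSpace ℝ (Fin n)) = (ψ y : ℝ) := by
      have heq : (f.restrictScalars ℤ) ∘ₗ Λ.subtype
          = (Int.castAddHom ℝ).toIntLinearMap ∘ₗ ψ := by
        apply b.ext
        intro i
        simp only [LinearMap.comp_apply, LinearMap.restrictScalars_apply,
          Submodule.subtype_apply, AddMonoidHom.coe_toIntLinearMap]
        rw [← Module.Basis.ofZLatticeBasis_apply ℝ Λ b]
        exact Module.Basis.constr_basis bE ℝ _ i
      intro y
      have := congrArg (fun h => h y) heq
      simpa using this
    -- the vector representing f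
    let w : EuclideanSpace ℝ (Fin n) :=
      (InnerProductSpace.toDual ℝ (EuclideanSpace ℝ (Fin n))).symm
        (LinearMap.toContinuousLinearMap f)
    have hw_inner : ∀ y : EuclideanSpace ℝ (Fin n), (inner ℝ w y : ℝ) = f y := fun y =>
      InnerProductSpace.toDual_symm_apply
    have hwΛ : w ∈ Λ := by
      rw [hself]
      intro y hy
      exact ⟨ψ ⟨y, hy⟩, by rw [hw_inner]; exact hf ⟨y, hy⟩⟩
    -- w - x is orthogonal to U
    have horth : w - x ∈ Uᗮ := by
      rw [← hK]
      intro u hu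
      refine Submodule.span_induction ?_ ?_ ?_ ?_ hu
      · rintro k ⟨hkΛ, hkU⟩
        have h1 : (inner ℝ w k : ℝ) = (inner ℝ x k : ℝ) := by
          rw [hw_inner, hf ⟨k, hkΛ⟩, hψK ⟨k, hkΛ⟩ hkU]
        rw [inner_sub_right]
        linarith [h1, real_inner_comm k w, real_inner_comm k x]
      · simp
      · intro a b _ _ ha hb
        rw [inner_add_left, ha, hb, add_zero]
      · intro c a _ ha
        rw [inner_smul_left, ha, mul_zero]
    refine ⟨w, hwΛ, ?_⟩
    have h1 : U.orthogonalProjection (w - x) = 0 :=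
      Submodule.orthogonalProjectionOnto_apply_of_mem_orthogonal horth
    have h2 : (U.orthogonalProjection x : EuclideanSpace ℝ (Fin n)) = x :=
      (Submodule.starProjection_eq_self_iff (K := U)).mpr hxU
    have h3 : U.orthogonalProjection w = U.orthogonalProjection x := by
      have h4 := map_sub (U.orthogonalProjection) w x
      rw [h1] at h4
      exact (sub_eq_zero.mp h4.symm)
    rw [h3]
    exact h2
end
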